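/- The Goldstein–Price function satisfies f(x,y) ≥ 3 for all real x, y. -/
import Mathlib

theorem goldstein_price_lower_bound
    (f : ℝ × ℝ → ℝ)
    (hf : ∀ p : ℝ × ℝ, f p =
      (1 + (p.1 + p.2 + 1) ^ 2 *
        (19 - 14 * p.1 + 3 * p.1 ^ 2 - 14 * p.2 + 6 * p.1 * p.2 + 3 * p.2 ^ 2)) *
      (30 + (2 * p.1 - 3 * p.2) ^ 2 *
        (18 - 32 * p.1 + 12 * p.1 ^ 2 + 48 * p.2 - 36 * p.1 * p.2 + 27 * p.2 ^ 2))) :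
    ∀ p : ℝ × ℝ, 3 ≤ f p := by
  intro p
  rw [hf]
  obtain ⟨x, y⟩ := p
  simp only
  set s : ℝ := x + y + 1 with hs
  set t : ℝ := 2 * x - 3 * y with ht
  have hA : (1:ℝ) ≤ 1 + s ^ 2 *
      (19 - 14 * x + 3 * x ^ 2 - 14 * y + 6 * x * y + 3 * y ^ 2) := by
    have h1 : 19 - 14 * x + 3 * x ^ 2 - 14 * y + 6 * x * y + 3 * y ^ 2
        = 3 * s ^ 2 - 20 * s + 36 := by rw [hs]; ring
    nlinarith [sq_nonneg (s * (3 * s - 10)), sq_nonneg s]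
  have hB : (3:ℝ) ≤ 30 + t ^ 2 *
      (18 - 32 * x + 12 * x ^ 2 + 48 * y - 36 * x * y + 27 * y ^ 2) := by
    have h1 : 18 - 32 * x + 12 * x ^ 2 + 48 * y - 36 * x * y + 27 * y ^ 2
        = 3 * t ^ 2 - 16 * t + 18 := by rw [ht]; ring
    have h2 : (0:ℝ) ≤ (t - 3) ^ 2 * (3 * t ^ 2 + 2 * t + 3) :=
      mul_nonneg (sq_nonneg _) (by nlinarith [sq_nonneg (3 * t + 1)])
    nlinarith [h2]
  nlinarith [mul_le_mul hA hB (by linarith) (by linarith)]
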